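/- For every u ∈ U: Q^a(u) ≥ λ_F(4 sin²(π/(2N))) · ‖Du‖²_{ℓ²ε}; moreover λ_F(4 sin²(π/(2N))) ≥ A_F. -/

import Mathlib

open Finset

noncomputable section

/-- `u` is `2N`-periodic. -/
def IsPer (N : ℤ) (u : ℤ → ℝ) : Prop := ∀ ℓ : ℤ, u (ℓ + 2*N) = u ℓ

/-- `u` belongs to the displacement space `U`: `2N`-periodic with zero mean. -/
def InU (N : ℤ) (u : ℤ → ℝ) : Prop :=
  IsPer N u ∧ ∑ ℓ ∈ Finset.Icc (-N+1) N, u ℓ = 0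

/-- the scaled reference atomic spacing `ε = 1/N`. -/
def eps (N : ℤ) : ℝ := 1 / (N : ℝ)

/-- discrete derivative `(Dv)_ℓ = (v_ℓ - v_{ℓ-1})/ε`. -/
def Dd (N : ℤ) (v : ℤ → ℝ) : ℤ → ℝ := fun ℓ => (v ℓ - v (ℓ-1)) / eps N

/-- squared `ℓ²ε` norm: `ε Σ_{ℓ=-N+1}^{N} v_ℓ²`. -/
def nrm2 (N : ℤ) (v : ℤ → ℝ) : ℝ := eps N * ∑ ℓ ∈ Finset.Icc (-N+1) N, (v ℓ)^2

/-- the atomistic second-variation quadratic form `Q^a`. -/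
def Qa (N : ℤ) (pF p2F rF r2F rrF rr2F g1 g2 : ℝ) (u : ℤ → ℝ) : ℝ :=
  eps N * ∑ ℓ ∈ Finset.Icc (-N+1) N,
    (g2 * (rF * (Dd N u ℓ + Dd N u (ℓ+1))
        + r2F * (Dd N u (ℓ-1) + Dd N u ℓ + Dd N u (ℓ+1) + Dd N u (ℓ+2)))^2
     + g1 * (rrF * (Dd N u ℓ)^2 + rr2F * (Dd N u ℓ + Dd N u (ℓ-1))^2
           + rrF * (Dd N u (ℓ+1))^2 + rr2F * (Dd N u (ℓ+1) + Dd N u (ℓ+2))^2)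
     + (1/2) * (pF * ((Dd N u ℓ)^2 + (Dd N u (ℓ+1))^2)
           + p2F * ((Dd N u ℓ + Dd N u (ℓ-1))^2 + (Dd N u (ℓ+1) + Dd N u (ℓ+2))^2)))

/-- `Ã_F = φ''_F + 4φ''_{2F}`. -/
def Atil (pF p2F : ℝ) : ℝ := pF + 4*p2F

/-- `Â_F = 4G''_F(ρ'_F+2ρ'_{2F})² + 2G'_F(ρ''_F+4ρ''_{2F})`. -/
def Ahat (rF r2F rrF rr2F g1 g2 : ℝ) : ℝ := 4*g2*(rF + 2*r2F)^2 + 2*g1*(rrF + 4*rr2F)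

/-- `A_F = Â_F + Ã_F`. -/
def AFc (pF p2F rF r2F rrF rr2F g1 g2 : ℝ) : ℝ := Ahat rF r2F rrF rr2F g1 g2 + Atil pF p2F

/-- `B_F`. -/
def BFc (p2F rF r2F rr2F g1 g2 : ℝ) : ℝ :=
  -(p2F + g2*(rF^2 + 20*r2F^2 + 12*rF*r2F) + 2*g1*rr2F)

/-- `C_F`. -/
def CFc (rF r2F g2 : ℝ) : ℝ := g2*(8*r2F^2 + 2*rF*r2F)

/-- `D_F`. -/
def DFc (r2F g2 : ℝ) : ℝ := -(g2*r2F^2)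

/-- `λ_F(s) = A_F + B_F s + C_F s² + D_F s³`. -/
def lamF (pF p2F rF r2F rrF rr2F g1 g2 s : ℝ) : ℝ :=
  AFc pF p2F rF r2F rrF rr2F g1 g2 + BFc p2F rF r2F rr2F g1 g2 * s
    + CFc rF r2F g2 * s^2 + DFc r2F g2 * s^3

section ShiftLemmas
variable {N : ℤ}

lemma isPer_shift {f : ℤ → ℝ} (hf : IsPer N f) (c : ℤ) : IsPer N (fun ℓ => f (ℓ + c)) := by
  intro ℓ
  show f (ℓ + 2*N + c) = f (ℓ + c)
  rw [show ℓ + 2*N + c = (ℓ + c) + 2*N by ring]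
  exact hf (ℓ + c)

lemma sum_shift_one (hN : 1 ≤ N) (f : ℤ → ℝ) (hf : IsPer N f) :
    ∑ ℓ ∈ Finset.Icc (-N+1) N, f (ℓ+1) = ∑ ℓ ∈ Finset.Icc (-N+1) N, f ℓ := by
  have e1 : Finset.Icc (-N+2) (N+1) = (Finset.Icc (-N+1) N).map (addRightEmbedding 1) := by
    rw [Finset.map_add_right_Icc]
    congr 1 <;> ring
  have h1 : ∑ x ∈ Finset.Icc (-N+2) (N+1), f x = ∑ ℓ ∈ Finset.Icc (-N+1) N, f (ℓ+1) := by
    rw [e1, Finset.sum_map]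
    rfl
  have h2 : Finset.Icc (-N+2) (N+1) = insert (N+1) (Finset.Icc (-N+2) N) := by
    ext x; simp only [mem_Icc, mem_insert]; omega
  have h3 : Finset.Icc (-N+1) N = insert (-N+1) (Finset.Icc (-N+2) N) := by
    ext x; simp only [mem_Icc, mem_insert]; omega
  have hm1 : (N+1) ∉ Finset.Icc (-N+2) N := by simp only [mem_Icc]; omega
  have hm2 : (-N+1) ∉ Finset.Icc (-N+2) N := by simp only [mem_Icc]; omega
  have hval : f (N+1) = f (-N+1) := by
    have := hf (-N+1)
    rwa [show -N+1+2*N = N+1 by ring] at this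
  rw [← h1, h2, h3, Finset.sum_insert hm1, Finset.sum_insert hm2, hval]

lemma sum_shift_neg_one (hN : 1 ≤ N) (f : ℤ → ℝ) (hf : IsPer N f) :
    ∑ ℓ ∈ Finset.Icc (-N+1) N, f (ℓ-1) = ∑ ℓ ∈ Finset.Icc (-N+1) N, f ℓ := by
  have hper : IsPer N (fun t => f (t - 1)) := by
    intro ℓ
    show f (ℓ + 2*N - 1) = f (ℓ - 1)
    rw [show ℓ + 2*N - 1 = (ℓ - 1) + 2*N by ring]
    exact hf (ℓ - 1)
  have h := sum_shift_one hN (fun t => f (t-1)) hper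
  have e : ∑ ℓ ∈ Finset.Icc (-N+1) N, f (ℓ+1-1) = ∑ ℓ ∈ Finset.Icc (-N+1) N, f ℓ :=
    Finset.sum_congr rfl (fun ℓ _ => by rw [show ℓ+1-1 = ℓ by ring])
  rw [e] at h
  exact h.symm

lemma sum_shift (hN : 1 ≤ N) (f : ℤ → ℝ) (hf : IsPer N f) (c : ℤ) :
    ∑ ℓ ∈ Finset.Icc (-N+1) N, f (ℓ + c) = ∑ ℓ ∈ Finset.Icc (-N+1) N, f ℓ := by
  induction c using Int.induction_on with
  | zero => exact Finset.sum_congr rfl (fun ℓ _ => by rw [add_zero])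
  | succ k ih =>
      have step := sum_shift_one hN (fun t => f (t + (k:ℤ))) (isPer_shift hf (k:ℤ))
      have e : ∑ ℓ ∈ Finset.Icc (-N+1) N, f (ℓ + ((k:ℤ)+1))
          = ∑ ℓ ∈ Finset.Icc (-N+1) N, f ((ℓ+1) + (k:ℤ)) :=
        Finset.sum_congr rfl (fun ℓ _ => by rw [show ℓ + ((k:ℤ)+1) = (ℓ+1) + (k:ℤ) by ring])
      rw [e]
      exact step.trans ih
  | pred k ih =>
      have step := sum_shift_neg_one hN (fun t => f (t + (-(k:ℤ)))) (isPer_shift hf (-(k:ℤ)))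
      have e : ∑ ℓ ∈ Finset.Icc (-N+1) N, f (ℓ + (-(k:ℤ)-1))
          = ∑ ℓ ∈ Finset.Icc (-N+1) N, f ((ℓ-1) + (-(k:ℤ))) :=
        Finset.sum_congr rfl (fun ℓ _ => by rw [show ℓ + (-(k:ℤ)-1) = (ℓ-1) + (-(k:ℤ)) by ring])
      rw [e]
      exact step.trans ih

lemma sum_Icc_eq_range (hN : 1 ≤ N) (f : ℤ → ℝ) (hf : IsPer N f) :
    ∑ ℓ ∈ Finset.Icc (-N+1) N, f ℓ = ∑ j ∈ Finset.range (2*N).toNat, f (j : ℤ) := by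
  have h1 := sum_shift hN f hf (N-1)
  have e1 : Finset.Icc (0:ℤ) (2*N-1) = (Finset.Icc (-N+1) N).map (addRightEmbedding (N-1)) := by
    rw [Finset.map_add_right_Icc]
    congr 1 <;> ring
  have h2 : ∑ x ∈ Finset.Icc (0:ℤ) (2*N-1), f x = ∑ ℓ ∈ Finset.Icc (-N+1) N, f (ℓ + (N-1)) := by
    rw [e1, Finset.sum_map]
    rfl
  have h3 : ∑ x ∈ Finset.Icc (0:ℤ) (2*N-1), f x = ∑ j ∈ Finset.range (2*N).toNat, f (j : ℤ) := by
    apply Finset.sum_nbij' (i := fun (x : ℤ) => x.toNat) (j := fun (j : ℕ) => (j : ℤ))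
    · intro x hx
      simp only [mem_Icc] at hx
      simp only [mem_range]
      omega
    · intro j hj
      simp only [mem_range] at hj
      simp only [mem_Icc]
      omega
    · intro x hx
      simp only [mem_Icc] at hx
      omega
    · intro j hj
      simp
    · intro x hx
      simp only [mem_Icc] at hx
      rw [Int.toNat_of_nonneg hx.1]
  rw [← h3, h2, h1]

end ShiftLemmas

section WirtingerCore

variable (n : ℕ)

/-- primitive n-th root of unity -/
def omg (n : ℕ) : ℂ := Complex.exp ((2*Real.pi/n : ℝ) * Complex.I)

lemma omg_ne_zero : omg n ≠ 0 := Complex.exp_ne_zero _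

lemma omg_zpow (d : ℤ) : (omg n) ^ d = Complex.exp ((2*Real.pi*d/n : ℝ) * Complex.I) := by
  rw [omg, ← Complex.exp_int_mul]
  congr 1
  push_cast
  ring

lemma omg_pow_n (hn : 0 < n) : (omg n) ^ (n:ℤ) = 1 := by
  rw [omg_zpow]
  have hne : (n:ℝ) ≠ 0 := by positivity
  rw [show (2*Real.pi*(n:ℤ)/n : ℝ) = 2*Real.pi by push_cast; field_simp]
  have : ((2*Real.pi : ℝ) : ℂ) * Complex.I = 2 * (Real.pi : ℂ) * Complex.I := by push_cast; ring
  rw [this, Complex.exp_two_pi_mul_I]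

lemma omg_eq_one_iff (hn : 0 < n) (d : ℤ) : (omg n) ^ d = 1 ↔ (n:ℤ) ∣ d := by
  constructor
  · intro h
    rw [omg_zpow, Complex.exp_eq_one_iff] at h
    obtain ⟨k, hk⟩ := h
    have him := congrArg Complex.im hk
    simp only [Complex.mul_im, Complex.intCast_re, Complex.intCast_im,
      Complex.ofReal_re, Complex.ofReal_im, Complex.I_re, Complex.I_im, Complex.mul_re,
      Complex.re_ofNat, Complex.im_ofNat] at him
    have hne : (n:ℝ) ≠ 0 := by positivity
    have hπ : Real.pi ≠ 0 := Real.pi_ne_zero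
    have hreal : (d:ℝ) = (k:ℝ) * (n:ℝ) := by
      field_simp at him
      nlinarith [him, Real.pi_pos]
    refine ⟨k, ?_⟩
    have hz : d = k * (n:ℤ) := by exact_mod_cast hreal
    rw [hz, mul_comm]
  · rintro ⟨k, rfl⟩
    rw [zpow_mul, omg_pow_n n hn, one_zpow]

lemma omg_orth (hn : 0 < n) (d : ℤ) (hd : ¬ (n:ℤ) ∣ d) :
    ∑ k ∈ Finset.range n, ((omg n) ^ d) ^ k = 0 := by
  have hne : (omg n) ^ d ≠ 1 := fun h => hd ((omg_eq_one_iff n hn d).mp h)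
  rw [geom_sum_eq hne]
  have h1 : ((omg n) ^ d) ^ n = 1 := by
    rw [← zpow_natCast ((omg n)^d) n, ← zpow_mul, mul_comm, zpow_mul, omg_pow_n n hn, one_zpow]
  rw [h1, sub_self, zero_div]

lemma conj_omg : (starRingEnd ℂ) (omg n) = (omg n)⁻¹ := by
  rw [omg, ← Complex.exp_conj, ← Complex.exp_neg]
  congr 1
  simp only [map_mul, Complex.conj_ofReal, Complex.conj_I]
  ring

lemma conj_omg_zpow (m : ℤ) : (starRingEnd ℂ) ((omg n) ^ m) = (omg n) ^ (-m) := by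
  rw [map_zpow₀, conj_omg, inv_zpow, ← zpow_neg]

lemma parseval (hn : 0 < n) (g : ℤ → ℝ) :
    ∑ k ∈ Finset.range n, Complex.normSq (∑ j ∈ Finset.range n, (g j : ℂ) * (omg n) ^ ((k:ℤ)*(j:ℤ)))
      = n * ∑ j ∈ Finset.range n, (g j)^2 := by
  have key : ∑ k ∈ Finset.range n, ((∑ j ∈ Finset.range n, (g j : ℂ) * (omg n) ^ ((k:ℤ)*(j:ℤ))) *
      (starRingEnd ℂ) (∑ j ∈ Finset.range n, (g j : ℂ) * (omg n) ^ ((k:ℤ)*(j:ℤ))))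
      = (n : ℂ) * ∑ j ∈ Finset.range n, ((g j : ℂ))^2 := by
    have expand : ∀ k : ℕ, ((∑ j ∈ Finset.range n, (g j : ℂ) * (omg n) ^ ((k:ℤ)*(j:ℤ))) *
        (starRingEnd ℂ) (∑ j ∈ Finset.range n, (g j : ℂ) * (omg n) ^ ((k:ℤ)*(j:ℤ))))
        = ∑ j ∈ Finset.range n, ∑ i ∈ Finset.range n,
            (g j : ℂ) * (g i : ℂ) * ((omg n) ^ ((j:ℤ)-(i:ℤ)))^k := by
      intro k
      rw [map_sum, Finset.sum_mul_sum]
      apply Finset.sum_congr rfl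
      intro j _
      apply Finset.sum_congr rfl
      intro i _
      rw [map_mul, conj_omg_zpow, Complex.conj_ofReal]
      rw [show ((omg n) ^ ((j:ℤ)-(i:ℤ)))^k = (omg n)^((k:ℤ)*(j:ℤ)) * (omg n)^(-((k:ℤ)*(i:ℤ))) from by
        rw [← zpow_natCast ((omg n)^((j:ℤ)-(i:ℤ))) k, ← zpow_mul,
          show ((j:ℤ)-(i:ℤ))*(k:ℤ) = (k:ℤ)*(j:ℤ) + -((k:ℤ)*(i:ℤ)) by ring,
          zpow_add₀ (omg_ne_zero n)]]
      ring
    calc ∑ k ∈ Finset.range n, ((∑ j ∈ Finset.range n, (g j : ℂ) * (omg n) ^ ((k:ℤ)*(j:ℤ))) *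
        (starRingEnd ℂ) (∑ j ∈ Finset.range n, (g j : ℂ) * (omg n) ^ ((k:ℤ)*(j:ℤ))))
        = ∑ k ∈ Finset.range n, ∑ j ∈ Finset.range n, ∑ i ∈ Finset.range n,
            (g j : ℂ) * (g i : ℂ) * ((omg n) ^ ((j:ℤ)-(i:ℤ)))^k :=
          Finset.sum_congr rfl (fun k _ => expand k)
      _ = ∑ j ∈ Finset.range n, ∑ i ∈ Finset.range n,
            (g j : ℂ) * (g i : ℂ) * (∑ k ∈ Finset.range n, ((omg n) ^ ((j:ℤ)-(i:ℤ)))^k) := by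
          rw [Finset.sum_comm]
          apply Finset.sum_congr rfl
          intro j _
          rw [Finset.sum_comm]
          apply Finset.sum_congr rfl
          intro i _
          rw [Finset.mul_sum]
      _ = ∑ j ∈ Finset.range n, ∑ i ∈ Finset.range n,
            (g j : ℂ) * (g i : ℂ) * (if i = j then (n:ℂ) else 0) := by
          apply Finset.sum_congr rfl
          intro j hj
          apply Finset.sum_congr rfl
          intro i hi
          congr 1
          by_cases hij : i = j
          · subst hij
            simp
          · rw [if_neg hij]
            apply omg_orth n hn
            intro hdvd
            simp only [Finset.mem_range] at hj hi
            have h0 : (j:ℤ) - (i:ℤ) = 0 := by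
              apply Int.eq_zero_of_abs_lt_dvd hdvd
              rw [abs_lt]
              omega
            have hji : j = i := by omega
            exact hij hji.symm
      _ = (n : ℂ) * ∑ j ∈ Finset.range n, ((g j : ℂ))^2 := by
          rw [Finset.mul_sum]
          apply Finset.sum_congr rfl
          intro j hj
          have hite : ∀ i ∈ Finset.range n, (g j : ℂ) * (g i : ℂ) * (if i = j then (n:ℂ) else 0)
              = if i = j then (g j : ℂ) * (g i : ℂ) * (n:ℂ) else 0 := by
            intro i _
            rw [mul_ite, mul_zero]
          rw [Finset.sum_congr rfl hite]
          rw [Finset.sum_ite_eq' (Finset.range n) j (fun i => (g j : ℂ) * (g i : ℂ) * (n:ℂ))]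
          rw [if_pos hj]
          ring
  have recast : ∀ k : ℕ, ((∑ j ∈ Finset.range n, (g j : ℂ) * (omg n) ^ ((k:ℤ)*(j:ℤ))) *
      (starRingEnd ℂ) (∑ j ∈ Finset.range n, (g j : ℂ) * (omg n) ^ ((k:ℤ)*(j:ℤ))))
      = ((Complex.normSq (∑ j ∈ Finset.range n, (g j : ℂ) * (omg n) ^ ((k:ℤ)*(j:ℤ))) : ℝ) : ℂ) :=
    fun k => Complex.mul_conj _
  rw [Finset.sum_congr rfl (fun k _ => recast k)] at key
  have final : ((∑ k ∈ Finset.range n, Complex.normSq (∑ j ∈ Finset.range n, (g j : ℂ) * (omg n) ^ ((k:ℤ)*(j:ℤ))) : ℝ) : ℂ)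
      = (((n : ℝ) * ∑ j ∈ Finset.range n, (g j)^2 : ℝ) : ℂ) := by
    push_cast
    push_cast at key
    linear_combination key
  exact_mod_cast final

lemma shift_range_sum (hn : 0 < n) (G : ℤ → ℂ) (hG : ∀ t : ℤ, G (t + n) = G t) :
    ∑ j ∈ Finset.range n, G ((j:ℤ) - 1) = ∑ j ∈ Finset.range n, G (j:ℤ) := by
  obtain ⟨m, rfl⟩ : ∃ m, n = m + 1 := ⟨n - 1, by omega⟩
  rw [Finset.sum_range_succ' (fun j => G ((j:ℤ) - 1)) m]
  rw [Finset.sum_range_succ (fun j => G (j:ℤ)) m]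
  congr 1
  · apply Finset.sum_congr rfl
    intro i _
    congr 1
    push_cast
    ring
  · have h2 : G ((m:ℤ)) = G (-1) := by
      have h3 := hG (-1)
      rw [show (-1 : ℤ) + ((m+1 : ℕ):ℤ) = (m:ℤ) by push_cast; ring] at h3
      exact h3
    rw [show ((0:ℕ):ℤ) - 1 = (-1 : ℤ) by norm_num]
    exact h2.symm

lemma hatD (hn : 0 < n) (f : ℤ → ℝ) (hper : ∀ t : ℤ, f (t + n) = f t) (k : ℕ) :
    ∑ j ∈ Finset.range n, ((f j - f ((j:ℤ) - 1) : ℝ) : ℂ) * (omg n) ^ ((k:ℤ)*(j:ℤ))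
      = (1 - (omg n)^(k:ℤ)) * ∑ j ∈ Finset.range n, (f j : ℂ) * (omg n) ^ ((k:ℤ)*(j:ℤ)) := by
  have split : ∑ j ∈ Finset.range n, ((f j - f ((j:ℤ) - 1) : ℝ) : ℂ) * (omg n) ^ ((k:ℤ)*(j:ℤ))
      = (∑ j ∈ Finset.range n, (f j : ℝ) * (omg n) ^ ((k:ℤ)*(j:ℤ)))
        - ∑ j ∈ Finset.range n, ((f ((j:ℤ) - 1) : ℝ) : ℂ) * (omg n) ^ ((k:ℤ)*(j:ℤ)) := by
    rw [← Finset.sum_sub_distrib]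
    apply Finset.sum_congr rfl
    intro j _
    push_cast
    ring
  set G : ℤ → ℂ := fun t => (f t : ℂ) * (omg n) ^ ((k:ℤ)*t) with hGdef
  have hGper : ∀ t : ℤ, G (t + n) = G t := by
    intro t
    show (f (t + n) : ℂ) * (omg n) ^ ((k:ℤ)*(t + n)) = (f t : ℂ) * (omg n) ^ ((k:ℤ)*t)
    rw [hper t]
    congr 1
    rw [show (k:ℤ)*(t+(n:ℤ)) = (k:ℤ)*t + (n:ℤ)*(k:ℤ) by ring, zpow_add₀ (omg_ne_zero n),
      zpow_mul (omg n) (n:ℤ) (k:ℤ), omg_pow_n n hn, one_zpow, mul_one]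
  have key : ∑ j ∈ Finset.range n, ((f ((j:ℤ) - 1) : ℝ) : ℂ) * (omg n) ^ ((k:ℤ)*(j:ℤ))
      = (omg n)^(k:ℤ) * ∑ j ∈ Finset.range n, (f j : ℂ) * (omg n) ^ ((k:ℤ)*(j:ℤ)) := by
    have e1 : ∀ j : ℕ, ((f ((j:ℤ) - 1) : ℝ) : ℂ) * (omg n) ^ ((k:ℤ)*(j:ℤ))
        = (omg n)^(k:ℤ) * G ((j:ℤ) - 1) := by
      intro j
      show _ = (omg n)^(k:ℤ) * ((f ((j:ℤ) - 1) : ℂ) * (omg n) ^ ((k:ℤ)*((j:ℤ) - 1)))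
      rw [show (k:ℤ)*(j:ℤ) = (k:ℤ) + (k:ℤ)*((j:ℤ)-1) by ring, zpow_add₀ (omg_ne_zero n)]
      ring
    rw [Finset.sum_congr rfl (fun j _ => e1 j), ← Finset.mul_sum,
      shift_range_sum n hn G hGper]
  rw [split, key]
  push_cast
  ring

lemma normSq_one_sub_omg (k : ℕ) :
    Complex.normSq (1 - (omg n)^(k:ℤ)) = 2 - 2*Real.cos (2*Real.pi*k/n) := by
  rw [omg_zpow]
  rw [show ((2*Real.pi*(k:ℤ)/n : ℝ) : ℂ) * Complex.I = ((2*Real.pi*(k:ℕ)/n : ℝ) : ℂ) * Complex.I by push_cast; ring]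
  rw [Complex.exp_mul_I, ← Complex.ofReal_cos, ← Complex.ofReal_sin]
  rw [Complex.normSq_apply]
  simp only [Complex.sub_re, Complex.sub_im, Complex.one_re, Complex.one_im, Complex.add_re,
    Complex.add_im, Complex.ofReal_re, Complex.ofReal_im, Complex.mul_re, Complex.mul_im,
    Complex.I_re, Complex.I_im]
  nlinarith [Real.sin_sq_add_cos_sq (2*Real.pi*(k:ℕ)/n)]

lemma cos_bound (hn : 2 ≤ n) (k : ℕ) (hk1 : 1 ≤ k) (hk2 : k + 1 ≤ n) :
    4 * Real.sin (Real.pi/n)^2 ≤ 2 - 2*Real.cos (2*Real.pi*k/n) := by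
  have hn0 : (0:ℝ) < n := by positivity
  have hn2 : (2:ℝ) ≤ n := by exact_mod_cast hn
  have hk1R : (1:ℝ) ≤ k := by exact_mod_cast hk1
  have hk2R : (k:ℝ) + 1 ≤ n := by exact_mod_cast hk2
  have hπ := Real.pi_pos
  set x := Real.pi * k / n with hxdef
  have hxe : 2*Real.pi*(k:ℕ)/n = 2*x := by rw [hxdef]; ring
  have hhalf : Real.sin x ^ 2 = 1/2 - Real.cos (2*x)/2 := Real.sin_sq_eq_half_sub x
  have hx1 : Real.pi/n ≤ x := by
    rw [hxdef, div_le_div_iff₀ hn0 hn0]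
    nlinarith [mul_nonneg (mul_nonneg hπ.le (by linarith : (0:ℝ) ≤ (k:ℝ) - 1)) hn0.le]
  have hx2 : x ≤ Real.pi - Real.pi/n := by
    rw [hxdef, show Real.pi - Real.pi/n = (Real.pi*n - Real.pi)/n by field_simp, div_le_div_iff₀ hn0 hn0]
    nlinarith [mul_nonneg (mul_nonneg hπ.le (by linarith : (0:ℝ) ≤ (n:ℝ) - 1 - (k:ℝ))) hn0.le]
  have hpn0 : 0 < Real.pi/n := by positivity
  have hpn2 : Real.pi/n ≤ Real.pi/2 := by
    rw [div_le_div_iff₀ hn0 two_pos]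
    nlinarith
  have hs0 : 0 ≤ Real.sin (Real.pi/n) := by
    apply Real.sin_nonneg_of_nonneg_of_le_pi (le_of_lt hpn0)
    linarith
  have hss : Real.sin (Real.pi/n) ≤ Real.sin x := by
    by_cases hx : x ≤ Real.pi/2
    · exact Real.sin_le_sin_of_le_of_le_pi_div_two (by linarith) hx hx1
    · rw [← Real.sin_pi_sub x]
      apply Real.sin_le_sin_of_le_of_le_pi_div_two (by linarith)
      · linarith
      · linarith
  have hsq : Real.sin (Real.pi/n)^2 ≤ Real.sin x ^2 := by
    apply pow_le_pow_left₀ hs0 hss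
  rw [hxe]
  nlinarith [hhalf, hsq]

lemma core (hn : 2 ≤ n) (f : ℤ → ℝ) (hper : ∀ t : ℤ, f (t + n) = f t)
    (hmean : ∑ j ∈ Finset.range n, f (j:ℤ) = 0) :
    4 * Real.sin (Real.pi/n)^2 * ∑ j ∈ Finset.range n, (f (j:ℤ))^2
      ≤ ∑ j ∈ Finset.range n, (f (j:ℤ) - f ((j:ℤ)-1))^2 := by
  have hn0 : 0 < n := by omega
  have hp1 := parseval n hn0 f
  have hp2 := parseval n hn0 (fun t => f t - f (t - 1))
  have hrw : ∀ k ∈ Finset.range n,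
      Complex.normSq (∑ j ∈ Finset.range n, ((f (j:ℤ) - f ((j:ℤ)-1) : ℝ) : ℂ) * (omg n)^((k:ℤ)*(j:ℤ)))
      = Complex.normSq (1 - (omg n)^(k:ℤ)) *
        Complex.normSq (∑ j ∈ Finset.range n, (f (j:ℤ) : ℂ) * (omg n)^((k:ℤ)*(j:ℤ))) := by
    intro k _
    rw [hatD n hn0 f hper k, Complex.normSq_mul]
  rw [Finset.sum_congr rfl hrw] at hp2
  have hc0 : (∑ j ∈ Finset.range n, (f (j:ℤ) : ℂ) * (omg n)^(((0:ℕ):ℤ)*(j:ℤ))) = 0 := by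
    have e : ∀ j ∈ Finset.range n, (f (j:ℤ) : ℂ) * (omg n)^(((0:ℕ):ℤ)*(j:ℤ)) = ((f (j:ℤ) : ℝ) : ℂ) := by
      intro j _
      rw [show ((0:ℕ):ℤ)*(j:ℤ) = 0 by simp, zpow_zero, mul_one]
    rw [Finset.sum_congr rfl e, ← Complex.ofReal_sum, hmean, Complex.ofReal_zero]
  have hbound : ∀ k ∈ Finset.range n,
      4 * Real.sin (Real.pi/n)^2 *
        Complex.normSq (∑ j ∈ Finset.range n, (f (j:ℤ) : ℂ) * (omg n)^((k:ℤ)*(j:ℤ)))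
      ≤ Complex.normSq (1 - (omg n)^(k:ℤ)) *
        Complex.normSq (∑ j ∈ Finset.range n, (f (j:ℤ) : ℂ) * (omg n)^((k:ℤ)*(j:ℤ))) := by
    intro k hk
    rcases Nat.eq_zero_or_pos k with h0 | hpos
    · subst h0
      rw [hc0]
      simp
    · have hcb := cos_bound n hn k hpos (by simp only [Finset.mem_range] at hk; omega)
      rw [normSq_one_sub_omg]
      exact mul_le_mul_of_nonneg_right (by linarith) (Complex.normSq_nonneg _)
  have hsum := Finset.sum_le_sum hbound
  rw [← Finset.mul_sum, hp1, hp2] at hsum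
  have hnR : (0:ℝ) < n := by positivity
  have key2 : (n:ℝ) * (4 * Real.sin (Real.pi/n)^2 * ∑ j ∈ Finset.range n, (f (j:ℤ))^2)
      ≤ (n:ℝ) * ∑ j ∈ Finset.range n, (f (j:ℤ) - f ((j:ℤ)-1))^2 := by
    nlinarith [hsum]
  exact le_of_mul_le_mul_left key2 hnR

end WirtingerCore


lemma wirtingerZ (N : ℤ) (hN : 1 ≤ N) (v : ℤ → ℝ) (hper : IsPer N v)
    (hmean : ∑ ℓ ∈ Finset.Icc (-N+1) N, v ℓ = 0) :
    4 * Real.sin (Real.pi/(2*(N:ℝ)))^2 * ∑ ℓ ∈ Finset.Icc (-N+1) N, (v ℓ)^2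
      ≤ ∑ ℓ ∈ Finset.Icc (-N+1) N, (v ℓ - v (ℓ-1))^2 := by
  set n := (2*N).toNat with hndef
  have hcast : (n:ℤ) = 2*N := Int.toNat_of_nonneg (by omega)
  have hn2 : 2 ≤ n := by omega
  have hcastR : (n:ℝ) = 2*(N:ℝ) := by exact_mod_cast congrArg (fun z : ℤ => (z : ℝ)) hcast
  have hperN : ∀ t : ℤ, v (t + n) = v t := by
    intro t
    rw [hcast]
    exact hper t
  have hm : ∑ j ∈ Finset.range n, v (j:ℤ) = 0 := by
    rw [← sum_Icc_eq_range hN v hper]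
    exact hmean
  have hcore := core n hn2 v hperN hm
  have hper2 : IsPer N (fun ℓ => (v ℓ)^2) := by
    intro ℓ
    show (v (ℓ+2*N))^2 = (v ℓ)^2
    rw [hper ℓ]
  have hper3 : IsPer N (fun ℓ => (v ℓ - v (ℓ-1))^2) := by
    intro ℓ
    show (v (ℓ+2*N) - v (ℓ+2*N-1))^2 = (v ℓ - v (ℓ-1))^2
    rw [hper ℓ, show ℓ+2*N-1 = (ℓ-1)+2*N by ring, hper (ℓ-1)]
  have e2 : ∑ ℓ ∈ Finset.Icc (-N+1) N, (v ℓ)^2 = ∑ j ∈ Finset.range n, (v (j:ℤ))^2 :=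
    sum_Icc_eq_range hN (fun ℓ => (v ℓ)^2) hper2
  have e3 : ∑ ℓ ∈ Finset.Icc (-N+1) N, (v ℓ - v (ℓ-1))^2
      = ∑ j ∈ Finset.range n, (v (j:ℤ) - v ((j:ℤ)-1))^2 :=
    sum_Icc_eq_range hN (fun ℓ => (v ℓ - v (ℓ-1))^2) hper3
  rw [e2, e3, ← hcastR]
  exact hcore

lemma corr_shift (N : ℤ) (hN : 1 ≤ N) (a : ℤ → ℝ) (ha : IsPer N a) (c d : ℤ) :
    ∑ ℓ ∈ Finset.Icc (-N+1) N, a (ℓ+c) * a (ℓ+c+d)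
      = ∑ ℓ ∈ Finset.Icc (-N+1) N, a ℓ * a (ℓ+d) := by
  have hg : IsPer N (fun t => a t * a (t+d)) := by
    intro ℓ
    show a (ℓ+2*N) * a (ℓ+2*N+d) = a ℓ * a (ℓ+d)
    rw [ha ℓ, show ℓ+2*N+d = (ℓ+d)+2*N by ring, ha (ℓ+d)]
  exact sum_shift hN (fun t => a t * a (t+d)) hg c


lemma aux_Gs_nonneg (bb cc dd s : ℝ) (hb : 0 ≤ bb) (hb8 : 0 ≤ bb + 8*cc + 48*dd)
    (hdd : dd ≤ 0) (hs0 : 0 ≤ s) (hs4 : s ≤ 4) : 0 ≤ bb + 2*cc*s + 3*dd*s^2 := by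
  nlinarith [mul_nonneg (by linarith : (0:ℝ) ≤ 4 - s) hb, mul_nonneg hs0 hb8,
    mul_nonneg (mul_nonneg (by linarith : (0:ℝ) ≤ -dd) hs0) (by linarith : (0:ℝ) ≤ 4-s)]

lemma aux_G4_nonneg (bb cc dd s : ℝ) (hb4 : 0 ≤ bb + 4*cc + 16*dd) (hb8 : 0 ≤ bb + 8*cc + 48*dd)
    (hdd : dd ≤ 0) (hs0 : 0 ≤ s) (hs4 : s ≤ 4) : 0 ≤ bb + cc*(4+s) + dd*(16+4*s+s^2) := by
  nlinarith [mul_nonneg (by linarith : (0:ℝ) ≤ 4 - s) hb4, mul_nonneg hs0 hb8,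
    mul_nonneg (mul_nonneg (by linarith : (0:ℝ) ≤ -dd) hs0) (by linarith : (0:ℝ) ≤ 4-s)]

lemma aux_cube_nonneg (bb cc dd s : ℝ) (hb : 0 ≤ bb) (hcd : 0 ≤ cc + 4*dd)
    (hdd : dd ≤ 0) (hs0 : 0 ≤ s) (hs4 : s ≤ 4) : 0 ≤ bb*s + cc*s^2 + dd*s^3 := by
  nlinarith [mul_nonneg hs0 hb, mul_nonneg (sq_nonneg s) hcd,
    mul_nonneg (mul_nonneg (by linarith : (0:ℝ) ≤ -dd) (sq_nonneg s)) (by linarith : (0:ℝ) ≤ 4 - s)]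

lemma aux_div_step (x y c : ℝ) (h : 0 ≤ c * (y - x)) (hc : 0 < c) : x ≤ y := by
  nlinarith

set_option maxHeartbeats 1000000 in
/-- sharp lower bound for `Q^a` and comparison with `A_F`. -/
theorem atomistic_stability_lower_bound (N : ℤ) (hN : 1 ≤ N)
    (pF p2F rF r2F rrF rr2F g1 g2 : ℝ)
    (hH1a : 0 < pF) (hH1b : p2F < 0) (hH1c : rF ≤ 0) (hH1d : r2F ≤ 0)
    (hH1e : 0 ≤ rrF) (hH1f : 0 ≤ rr2F) (hH1g : 0 ≤ g2)
    (hH2 : 0 ≤ BFc p2F rF r2F rr2F g1 g2) :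
    (∀ u : ℤ → ℝ, InU N u →
      lamF pF p2F rF r2F rrF rr2F g1 g2 (4 * Real.sin (Real.pi / (2*(N:ℝ)))^2)
          * nrm2 N (Dd N u)
        ≤ Qa N pF p2F rF r2F rrF rr2F g1 g2 u) ∧
    AFc pF p2F rF r2F rrF rr2F g1 g2
      ≤ lamF pF p2F rF r2F rrF rr2F g1 g2 (4 * Real.sin (Real.pi / (2*(N:ℝ)))^2) := by
  have hNR : (1:ℝ) ≤ (N:ℝ) := by exact_mod_cast hN
  have hNposR : (0:ℝ) < (N:ℝ) := by linarith
  set s : ℝ := 4 * Real.sin (Real.pi / (2*(N:ℝ)))^2 with hsdef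
  have hs0 : 0 ≤ s := by rw [hsdef]; positivity
  have hs4 : s ≤ 4 := by
    have h := Real.sin_sq_le_one (Real.pi / (2*(N:ℝ)))
    rw [hsdef]
    nlinarith
  clear_value s
  have hint1 : 0 ≤ g2 * ((-r2F) * (-(rF + 4*r2F))) :=
    mul_nonneg hH1g (mul_nonneg (by linarith) (by linarith))
  have hint2 : 0 ≤ g2 * ((-r2F) * (-(rF + 2*r2F))) :=
    mul_nonneg hH1g (mul_nonneg (by linarith) (by linarith))
  have hint3 : 0 ≤ g2 * ((-r2F) * (-(rF + r2F))) :=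
    mul_nonneg hH1g (mul_nonneg (by linarith) (by linarith))
  have hcc : 0 ≤ CFc rF r2F g2 := by
    simp only [CFc]
    nlinarith [hint1]
  have hcd : 0 ≤ CFc rF r2F g2 + 4 * DFc r2F g2 := by
    simp only [CFc, DFc]
    nlinarith [hint2]
  have hb8 : 0 ≤ BFc p2F rF r2F rr2F g1 g2 + 8 * CFc rF r2F g2 + 48 * DFc r2F g2 := by
    simp only [CFc, DFc]
    nlinarith [hint3, hH2]
  have hb4 : 0 ≤ BFc p2F rF r2F rr2F g1 g2 + 4 * CFc rF r2F g2 + 16 * DFc r2F g2 := by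
    simp only [CFc, DFc]
    nlinarith [hint2, hH2]
  have hdd : DFc r2F g2 ≤ 0 := by
    simp only [DFc]
    nlinarith [mul_nonneg hH1g (sq_nonneg r2F)]
  constructor
  · intro u hu
    obtain ⟨hper, _⟩ := hu
    have heps : 0 < eps N := by
      rw [eps]
      positivity
    simp only [Qa, nrm2]
    set a : ℤ → ℝ := Dd N u with hadef
    have haper : IsPer N a := by
      intro ℓ
      show (u (ℓ+2*N) - u (ℓ+2*N-1)) / eps N = (u ℓ - u (ℓ-1)) / eps N
      rw [hper ℓ, show ℓ+2*N-1 = (ℓ-1)+2*N by ring, hper (ℓ-1)]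
    have hamean : ∑ ℓ ∈ Finset.Icc (-N+1) N, a ℓ = 0 := by
      have e : ∀ ℓ ∈ Finset.Icc (-N+1) N, a ℓ = u ℓ / eps N - u (ℓ-1) / eps N := by
        intro ℓ _
        show (u ℓ - u (ℓ-1)) / eps N = _
        ring
      rw [Finset.sum_congr rfl e, Finset.sum_sub_distrib]
      have hperdiv : IsPer N (fun t => u t / eps N) := by
        intro ℓ
        show u (ℓ+2*N) / eps N = u ℓ / eps N
        rw [hper ℓ]
      have hshift : ∑ ℓ ∈ Finset.Icc (-N+1) N, u (ℓ-1) / eps N = ∑ ℓ ∈ Finset.Icc (-N+1) N, u ℓ / eps N :=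
        sum_shift_neg_one hN (fun t => u t / eps N) hperdiv
      rw [hshift, sub_self]
    have E : ∀ c d : ℤ, ∑ ℓ ∈ Finset.Icc (-N+1) N, a (ℓ+c) * a (ℓ+c+d) = ∑ ℓ ∈ Finset.Icc (-N+1) N, a ℓ * a (ℓ+d) :=
      corr_shift N hN a haper
    have hnrm : ∑ ℓ ∈ Finset.Icc (-N+1) N, (a ℓ)^2 = (∑ ℓ ∈ Finset.Icc (-N+1) N, a ℓ * a (ℓ+(0:ℤ))) := by
      have e : ∀ ℓ ∈ Finset.Icc (-N+1) N, (a ℓ)^2 = a (ℓ+(0:ℤ)) * (a (ℓ+(0:ℤ)+0)) := by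
        intro ℓ _
        ring_nf
      rw [Finset.sum_congr rfl e, E 0 0]
    have hXQ : ∑ ℓ ∈ Finset.Icc (-N+1) N,
        (g2 * (rF * (a ℓ + a (ℓ+1)) + r2F * (a (ℓ-1) + a ℓ + a (ℓ+1) + a (ℓ+2)))^2
         + g1 * (rrF * (a ℓ)^2 + rr2F * (a ℓ + a (ℓ-1))^2 + rrF * (a (ℓ+1))^2 + rr2F * (a (ℓ+1) + a (ℓ+2))^2)
         + (1/2) * (pF * ((a ℓ)^2 + (a (ℓ+1))^2) + p2F * ((a ℓ + a (ℓ-1))^2 + (a (ℓ+1) + a (ℓ+2))^2)))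
        = (pF + 2*p2F + 2*g1*rrF + 4*g1*rr2F + 2*g2*rF^2 + 4*g2*rF*r2F + 4*g2*r2F^2) * (∑ ℓ ∈ Finset.Icc (-N+1) N, a ℓ * a (ℓ+(0:ℤ)))
          + (2*p2F + 4*g1*rr2F + 2*g2*rF^2 + 8*g2*rF*r2F + 6*g2*r2F^2) * (∑ ℓ ∈ Finset.Icc (-N+1) N, a ℓ * a (ℓ+(1:ℤ)))
          + (4*g2*r2F^2 + 4*g2*rF*r2F) * (∑ ℓ ∈ Finset.Icc (-N+1) N, a ℓ * a (ℓ+(2:ℤ)))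
          + (2*g2*r2F^2) * (∑ ℓ ∈ Finset.Icc (-N+1) N, a ℓ * a (ℓ+(3:ℤ))) := by
      have e : ∀ ℓ ∈ Finset.Icc (-N+1) N,
          (g2 * (rF * (a ℓ + a (ℓ+1)) + r2F * (a (ℓ-1) + a ℓ + a (ℓ+1) + a (ℓ+2)))^2
         + g1 * (rrF * (a ℓ)^2 + rr2F * (a ℓ + a (ℓ-1))^2 + rrF * (a (ℓ+1))^2 + rr2F * (a (ℓ+1) + a (ℓ+2))^2)
         + (1/2) * (pF * ((a ℓ)^2 + (a (ℓ+1))^2) + p2F * ((a ℓ + a (ℓ-1))^2 + (a (ℓ+1) + a (ℓ+2))^2)))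
          = (g2*(rF+r2F)^2 + g1*(rrF+rr2F) + pF/2 + p2F/2) * (a (ℓ+(0:ℤ)) * a (ℓ+(0:ℤ)+0))
          + (g2*(rF+r2F)^2 + g1*(rrF+rr2F) + pF/2 + p2F/2) * (a (ℓ+(1:ℤ)) * a (ℓ+(1:ℤ)+0))
          + (g2*r2F^2 + g1*rr2F + p2F/2) * (a (ℓ+(-1:ℤ)) * a (ℓ+(-1:ℤ)+0))
          + (g2*r2F^2 + g1*rr2F + p2F/2) * (a (ℓ+(2:ℤ)) * a (ℓ+(2:ℤ)+0))
          + (2*g2*(rF+r2F)^2) * (a (ℓ+(0:ℤ)) * a (ℓ+(0:ℤ)+1))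
          + (2*g2*(rF+r2F)*r2F + 2*g1*rr2F + p2F) * (a (ℓ+(-1:ℤ)) * a (ℓ+(-1:ℤ)+1))
          + (2*g2*(rF+r2F)*r2F + 2*g1*rr2F + p2F) * (a (ℓ+(1:ℤ)) * a (ℓ+(1:ℤ)+1))
          + (2*g2*(rF+r2F)*r2F) * (a (ℓ+(-1:ℤ)) * a (ℓ+(-1:ℤ)+2))
          + (2*g2*(rF+r2F)*r2F) * (a (ℓ+(0:ℤ)) * a (ℓ+(0:ℤ)+2))
          + (2*g2*r2F^2) * (a (ℓ+(-1:ℤ)) * a (ℓ+(-1:ℤ)+3)) := by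
        intro ℓ _
        ring_nf
      rw [Finset.sum_congr rfl e]
      simp only [Finset.sum_add_distrib, ← Finset.mul_sum]
      rw [E 0 0, E 1 0, E (-1) 0, E 2 0, E 0 1, E (-1) 1, E 1 1, E (-1) 2, E 0 2, E (-1) 3]
      ring
    have hXN2 : ∑ ℓ ∈ Finset.Icc (-N+1) N, (a ℓ + a (ℓ-1))^2 = (2*(∑ ℓ ∈ Finset.Icc (-N+1) N, a ℓ * a (ℓ+(0:ℤ))) + 2*(∑ ℓ ∈ Finset.Icc (-N+1) N, a ℓ * a (ℓ+(1:ℤ)))) := by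
      have e : ∀ ℓ ∈ Finset.Icc (-N+1) N, (a ℓ + a (ℓ-1))^2
          = (a (ℓ+(0:ℤ)) * a (ℓ+(0:ℤ)+0)) + (a (ℓ+(-1:ℤ)) * a (ℓ+(-1:ℤ)+0))
            + 2 * (a (ℓ+(-1:ℤ)) * a (ℓ+(-1:ℤ)+1)) := by
        intro ℓ _
        ring_nf
      rw [Finset.sum_congr rfl e]
      simp only [Finset.sum_add_distrib, ← Finset.mul_sum]
      rw [E 0 0, E (-1) 0, E (-1) 1]
      ring
    have hXN1 : ∑ ℓ ∈ Finset.Icc (-N+1) N, ((a ℓ + a (ℓ-1)) - (a (ℓ-1) + a (ℓ-1-1)))^2 = (2*(∑ ℓ ∈ Finset.Icc (-N+1) N, a ℓ * a (ℓ+(0:ℤ))) + (-2)*(∑ ℓ ∈ Finset.Icc (-N+1) N, a ℓ * a (ℓ+(2:ℤ)))) := by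
      have e : ∀ ℓ ∈ Finset.Icc (-N+1) N, ((a ℓ + a (ℓ-1)) - (a (ℓ-1) + a (ℓ-1-1)))^2
          = (a (ℓ+(0:ℤ)) * a (ℓ+(0:ℤ)+0)) + (a (ℓ+(-2:ℤ)) * a (ℓ+(-2:ℤ)+0))
            + (-2) * (a (ℓ+(-2:ℤ)) * a (ℓ+(-2:ℤ)+2)) := by
        intro ℓ _
        ring_nf
      rw [Finset.sum_congr rfl e]
      simp only [Finset.sum_add_distrib, ← Finset.mul_sum]
      rw [E 0 0, E (-2) 0, E (-2) 2]
      ring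
    have hXQ2 : ∑ ℓ ∈ Finset.Icc (-N+1) N, ((2-s)*a ℓ - a (ℓ+1) - a (ℓ-1))^2 = (((2-s)^2+2)*(∑ ℓ ∈ Finset.Icc (-N+1) N, a ℓ * a (ℓ+(0:ℤ))) + (-(4*(2-s)))*(∑ ℓ ∈ Finset.Icc (-N+1) N, a ℓ * a (ℓ+(1:ℤ))) + 2*(∑ ℓ ∈ Finset.Icc (-N+1) N, a ℓ * a (ℓ+(2:ℤ)))) := by
      have e : ∀ ℓ ∈ Finset.Icc (-N+1) N, ((2-s)*a ℓ - a (ℓ+1) - a (ℓ-1))^2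
          = ((2-s)^2) * (a (ℓ+(0:ℤ)) * a (ℓ+(0:ℤ)+0)) + (a (ℓ+(1:ℤ)) * a (ℓ+(1:ℤ)+0))
            + (a (ℓ+(-1:ℤ)) * a (ℓ+(-1:ℤ)+0))
            + (-(2*(2-s))) * (a (ℓ+(0:ℤ)) * a (ℓ+(0:ℤ)+1))
            + (-(2*(2-s))) * (a (ℓ+(-1:ℤ)) * a (ℓ+(-1:ℤ)+1))
            + 2 * (a (ℓ+(-1:ℤ)) * a (ℓ+(-1:ℤ)+2)) := by
        intro ℓ _
        ring_nf
      rw [Finset.sum_congr rfl e]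
      simp only [Finset.sum_add_distrib, ← Finset.mul_sum]
      rw [E 0 0, E 1 0, E (-1) 0, E 0 1, E (-1) 1, E (-1) 2]
      ring
    have hXQ3 : ∑ ℓ ∈ Finset.Icc (-N+1) N, (((2-s)*a ℓ - a (ℓ+1) - a (ℓ-1)) + ((2-s)*a (ℓ-1) - a ℓ - a (ℓ-2)))^2
        = ((2+2*(1-s)^2)*(∑ ℓ ∈ Finset.Icc (-N+1) N, a ℓ * a (ℓ+(0:ℤ))) + (2*(1-s)^2-4*(1-s))*(∑ ℓ ∈ Finset.Icc (-N+1) N, a ℓ * a (ℓ+(1:ℤ))) + (-(4*(1-s)))*(∑ ℓ ∈ Finset.Icc (-N+1) N, a ℓ * a (ℓ+(2:ℤ))) + 2*(∑ ℓ ∈ Finset.Icc (-N+1) N, a ℓ * a (ℓ+(3:ℤ)))) := by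
      have e : ∀ ℓ ∈ Finset.Icc (-N+1) N, (((2-s)*a ℓ - a (ℓ+1) - a (ℓ-1)) + ((2-s)*a (ℓ-1) - a ℓ - a (ℓ-2)))^2
          = (a (ℓ+(-2:ℤ)) * a (ℓ+(-2:ℤ)+0)) + ((1-s)^2) * (a (ℓ+(-1:ℤ)) * a (ℓ+(-1:ℤ)+0))
            + ((1-s)^2) * (a (ℓ+(0:ℤ)) * a (ℓ+(0:ℤ)+0)) + (a (ℓ+(1:ℤ)) * a (ℓ+(1:ℤ)+0))
            + (-(2*(1-s))) * (a (ℓ+(-2:ℤ)) * a (ℓ+(-2:ℤ)+1))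
            + (2*(1-s)^2) * (a (ℓ+(-1:ℤ)) * a (ℓ+(-1:ℤ)+1))
            + (-(2*(1-s))) * (a (ℓ+(0:ℤ)) * a (ℓ+(0:ℤ)+1))
            + (-(2*(1-s))) * (a (ℓ+(-2:ℤ)) * a (ℓ+(-2:ℤ)+2))
            + (-(2*(1-s))) * (a (ℓ+(-1:ℤ)) * a (ℓ+(-1:ℤ)+2))
            + 2 * (a (ℓ+(-2:ℤ)) * a (ℓ+(-2:ℤ)+3)) := by
        intro ℓ _
        ring_nf
      rw [Finset.sum_congr rfl e]
      simp only [Finset.sum_add_distrib, ← Finset.mul_sum]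
      rw [E 0 0, E 1 0, E (-1) 0, E (-2) 0, E 0 1, E (-1) 1, E (-2) 1, E (-1) 2, E (-2) 2, E (-2) 3]
      ring
    have hQ2pos : (0:ℝ) ≤ ∑ ℓ ∈ Finset.Icc (-N+1) N, ((2-s)*a ℓ - a (ℓ+1) - a (ℓ-1))^2 :=
      Finset.sum_nonneg (fun ℓ _ => sq_nonneg _)
    have hQ3pos : (0:ℝ) ≤ ∑ ℓ ∈ Finset.Icc (-N+1) N, (((2-s)*a ℓ - a (ℓ+1) - a (ℓ-1)) + ((2-s)*a (ℓ-1) - a ℓ - a (ℓ-2)))^2 :=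
      Finset.sum_nonneg (fun ℓ _ => sq_nonneg _)
    rw [hnrm, hXQ]
    set T0 : ℝ := ∑ ℓ ∈ Finset.Icc (-N+1) N, a ℓ * a (ℓ+(0:ℤ)) with hT0def
    set T1 : ℝ := ∑ ℓ ∈ Finset.Icc (-N+1) N, a ℓ * a (ℓ+(1:ℤ)) with hT1def
    set T2 : ℝ := ∑ ℓ ∈ Finset.Icc (-N+1) N, a ℓ * a (ℓ+(2:ℤ)) with hT2def
    set T3 : ℝ := ∑ ℓ ∈ Finset.Icc (-N+1) N, a ℓ * a (ℓ+(3:ℤ)) with hT3def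
    clear_value T0 T1 T2 T3
    rcases eq_or_lt_of_le hN with rfl | hN2
    · -- N = 1 : equality case
      have hs4eq : s = 4 := by
        rw [hsdef]
        norm_num [Real.sin_pi_div_two]
      have hset1 : Finset.Icc ((-1:ℤ)+1) 1 = ({0, 1} : Finset ℤ) := by
        ext x
        simp only [Finset.mem_Icc, Finset.mem_insert, Finset.mem_singleton]
        omega
      have ha1 : ∀ c : ℤ, a (c+1) = -(a c) := by
        intro c
        have h := sum_shift hN a haper c
        rw [hamean, hset1] at h
        rw [hset1] at hamean
        rw [show ({0, 1} : Finset ℤ) = insert (0:ℤ) ({1} : Finset ℤ) from rfl,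
          Finset.sum_insert (by simp), Finset.sum_singleton] at h
        rw [zero_add, show (1:ℤ)+c = c+1 by ring] at h
        linarith
      have ha2 : ∀ c : ℤ, a (c+2) = a c := by
        intro c
        rw [show c+2 = (c+1)+1 by ring, ha1 (c+1), ha1 c, neg_neg]
      have hp1 : T1 = -T0 := by
        rw [hT1def, hT0def, ← Finset.sum_neg_distrib]
        apply Finset.sum_congr rfl
        intro ℓ _
        rw [ha1 ℓ, show ℓ+(0:ℤ) = ℓ by ring]
        ring
      have hp2 : T2 = T0 := by
        rw [hT2def, hT0def]
        apply Finset.sum_congr rfl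
        intro ℓ _
        rw [show ℓ+(2:ℤ) = ℓ+2 by ring, ha2 ℓ, show ℓ+(0:ℤ) = ℓ by ring]
      have hp3 : T3 = -T0 := by
        rw [hT3def, hT0def, ← Finset.sum_neg_distrib]
        apply Finset.sum_congr rfl
        intro ℓ _
        rw [show ℓ+(3:ℤ) = (ℓ+1)+2 by ring, ha2 (ℓ+1), ha1 ℓ, show ℓ+(0:ℤ) = ℓ by ring]
        ring
      apply le_of_eq
      rw [hp1, hp2, hp3, hs4eq]
      simp only [lamF, AFc, Ahat, Atil, BFc, CFc, DFc]
      ring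
    · -- N ≥ 2
      have hN2R : (1:ℝ) < (N:ℝ) := by exact_mod_cast hN2
      have hslt4 : s < 4 := by
        have harg0 : 0 < Real.pi / (2*(N:ℝ)) := by positivity
        have harglt : Real.pi / (2*(N:ℝ)) < Real.pi/2 :=
          div_lt_div_of_pos_left Real.pi_pos two_pos (by linarith)
        have hsin1 : Real.sin (Real.pi / (2*(N:ℝ))) < 1 := by
          have := Real.sin_lt_sin_of_lt_of_le_pi_div_two (by linarith) (le_refl (Real.pi/2)) harglt
          rwa [Real.sin_pi_div_two] at this
        have hsin0 : 0 ≤ Real.sin (Real.pi / (2*(N:ℝ))) :=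
          Real.sin_nonneg_of_nonneg_of_le_pi harg0.le (by nlinarith [Real.pi_pos])
        rw [hsdef]
        nlinarith
      have hbper : IsPer N (fun t => a t + a (t-1)) := by
        intro ℓ
        show a (ℓ+2*N) + a (ℓ+2*N-1) = a ℓ + a (ℓ-1)
        rw [haper ℓ, show ℓ+2*N-1 = (ℓ-1)+2*N by ring, haper (ℓ-1)]
      have hbmean : ∑ ℓ ∈ Finset.Icc (-N+1) N, (a ℓ + a (ℓ-1)) = 0 := by
        rw [Finset.sum_add_distrib, hamean]
        have h2 : ∑ ℓ ∈ Finset.Icc (-N+1) N, a (ℓ-1) = ∑ ℓ ∈ Finset.Icc (-N+1) N, a ℓ := sum_shift_neg_one hN a haper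
        rw [h2, hamean, add_zero]
      have hW : s * ∑ ℓ ∈ Finset.Icc (-N+1) N, (a ℓ + a (ℓ-1))^2
          ≤ ∑ ℓ ∈ Finset.Icc (-N+1) N, ((a ℓ + a (ℓ-1)) - (a (ℓ-1) + a (ℓ-1-1)))^2 := by
        rw [hsdef]
        exact wirtingerZ N hN (fun t => a t + a (t-1)) hbper hbmean
      rw [hXN1, hXN2] at hW
      rw [hXQ2] at hQ2pos
      rw [hXQ3] at hQ3pos
      have hGs : 0 ≤ BFc p2F rF r2F rr2F g1 g2 + 2*CFc rF r2F g2*s + 3*DFc r2F g2*s^2 :=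
        aux_Gs_nonneg _ _ _ _ hH2 hb8 hdd hs0 hs4
      have hG4 : 0 ≤ BFc p2F rF r2F rr2F g1 g2 + CFc rF r2F g2*(4+s) + DFc r2F g2*(16+4*s+s^2) :=
        aux_G4_nonneg _ _ _ _ hb4 hb8 hdd hs0 hs4
      have key0 : (4-s) * (((pF + 2*p2F + 2*g1*rrF + 4*g1*rr2F + 2*g2*rF^2 + 4*g2*rF*r2F + 4*g2*r2F^2) * T0
          + (2*p2F + 4*g1*rr2F + 2*g2*rF^2 + 8*g2*rF*r2F + 6*g2*r2F^2) * T1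
          + (4*g2*r2F^2 + 4*g2*rF*r2F) * T2
          + (2*g2*r2F^2) * T3) - lamF pF p2F rF r2F rrF rr2F g1 g2 s * T0)
          = (BFc p2F rF r2F rr2F g1 g2 + 2*CFc rF r2F g2*s + 3*DFc r2F g2*s^2) * ((2*T0 + (-2)*T2) - s*(2*T0 + 2*T1))
            + (BFc p2F rF r2F rr2F g1 g2 + CFc rF r2F g2*(4+s) + DFc r2F g2*(16+4*s+s^2)) * (((2-s)^2+2)*T0 + (-(4*(2-s)))*T1 + 2*T2)
            + (-DFc r2F g2)*(4-s) * ((2+2*(1-s)^2)*T0 + (2*(1-s)^2-4*(1-s))*T1 + (-(4*(1-s)))*T2 + 2*T3) := by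
        simp only [lamF, AFc, Ahat, Atil, BFc, CFc, DFc]
        ring
      have m1 : 0 ≤ (2*T0 + (-2)*T2) - s*(2*T0 + 2*T1) := by linarith
      have rhs_nonneg : 0 ≤ (BFc p2F rF r2F rr2F g1 g2 + 2*CFc rF r2F g2*s + 3*DFc r2F g2*s^2) * ((2*T0 + (-2)*T2) - s*(2*T0 + 2*T1))
            + (BFc p2F rF r2F rr2F g1 g2 + CFc rF r2F g2*(4+s) + DFc r2F g2*(16+4*s+s^2)) * (((2-s)^2+2)*T0 + (-(4*(2-s)))*T1 + 2*T2)
            + (-DFc r2F g2)*(4-s) * ((2+2*(1-s)^2)*T0 + (2*(1-s)^2-4*(1-s))*T1 + (-(4*(1-s)))*T2 + 2*T3) := by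
        have t1 := mul_nonneg hGs m1
        have t2 := mul_nonneg hG4 hQ2pos
        have t3 := mul_nonneg (mul_nonneg (by linarith : (0:ℝ) ≤ -DFc r2F g2) (by linarith : (0:ℝ) ≤ 4-s)) hQ3pos
        linarith
      have prod_nonneg : 0 ≤ (4-s) * (((pF + 2*p2F + 2*g1*rrF + 4*g1*rr2F + 2*g2*rF^2 + 4*g2*rF*r2F + 4*g2*r2F^2) * T0
          + (2*p2F + 4*g1*rr2F + 2*g2*rF^2 + 8*g2*rF*r2F + 6*g2*r2F^2) * T1
          + (4*g2*r2F^2 + 4*g2*rF*r2F) * T2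
          + (2*g2*r2F^2) * T3) - lamF pF p2F rF r2F rrF rr2F g1 g2 s * T0) := by
        rw [key0]
        exact rhs_nonneg
      have hmain : lamF pF p2F rF r2F rrF rr2F g1 g2 s * T0 ≤ (pF + 2*p2F + 2*g1*rrF + 4*g1*rr2F + 2*g2*rF^2 + 4*g2*rF*r2F + 4*g2*r2F^2) * T0
          + (2*p2F + 4*g1*rr2F + 2*g2*rF^2 + 8*g2*rF*r2F + 6*g2*r2F^2) * T1
          + (4*g2*r2F^2 + 4*g2*rF*r2F) * T2
          + (2*g2*r2F^2) * T3 := by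
        exact aux_div_step _ _ _ prod_nonneg (by linarith)
      calc lamF pF p2F rF r2F rrF rr2F g1 g2 s * (eps N * T0) = eps N * (lamF pF p2F rF r2F rrF rr2F g1 g2 s * T0) := by ring
        _ ≤ eps N * ((pF + 2*p2F + 2*g1*rrF + 4*g1*rr2F + 2*g2*rF^2 + 4*g2*rF*r2F + 4*g2*r2F^2) * T0
          + (2*p2F + 4*g1*rr2F + 2*g2*rF^2 + 8*g2*rF*r2F + 6*g2*r2F^2) * T1
          + (4*g2*r2F^2 + 4*g2*rF*r2F) * T2
          + (2*g2*r2F^2) * T3) := mul_le_mul_of_nonneg_left hmain heps.le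
  · simp only [lamF]
    have := aux_cube_nonneg (BFc p2F rF r2F rr2F g1 g2) (CFc rF r2F g2) (DFc r2F g2) s hH2 hcd hdd hs0 hs4
    linarith
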